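/- Let k be a commutative ring and G a finite group whose order |G| is invertible in k. Suppose G acts on the polynomial ring k[x₁, …, x_n] = MvPolynomial (Fin n) k by k-algebra automorphisms preserving each homogeneous component (equivalently, each g ∈ G sends every variable to a homogeneous linear form). Let I be a G-stable ideal of k[x₁, …, x_n] and B := k[x₁, …, x_n]/I with the induced G-action. Then: (1) the fixed subalgebra B^G is a finitely generated k-algebra; and (2) for every B-module P which is finitely generated over B and is equipped with an additive G-action satisfying g • (b · p) = (g • b) · (g • p) for all g ∈ G, b ∈ B, p ∈ P, the fixed submodule P^G = {p ∈ P : ∀ g ∈ G, g • p = p} is a finitely generated module over B^G. -/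

import Mathlib

/-- The fixed subalgebra `Sᴳ` of a group `G` acting on an `R`-algebra `S` by `R`-algebra
automorphisms (the action being given by `ρ : G →* (S ≃ₐ[R] S)`). -/
def fixedSubalgebra (R S : Type*) [CommSemiring R] [Semiring S] [Algebra R S]
    {G : Type*} [Monoid G] (ρ : G →* (S ≃ₐ[R] S)) : Subalgebra R S where
  carrier := {a | ∀ g : G, ρ g a = a}
  mul_mem' := fun {a b} ha hb g => by rw [map_mul, ha g, hb g]
  add_mem' := fun {a b} ha hb g => by rw [map_add, ha g, hb g]
  algebraMap_mem' := fun r g => (ρ g).commutes r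

/-- The automorphism group structure that `P ≃+ P` carried in the older Mathlib
(`f * g = g.trans f`, `1 = refl`, `f⁻¹ = f.symm`), now only available additively on `AddAut P`. -/
instance addEquivSelfGroup (P : Type*) [Add P] : Group (P ≃+ P) :=
  inferInstanceAs (Group (Multiplicative (AddAut P)))

/-- The fixed submodule `Pᴳ` of a `G`-action on a `B`-module `P` (additive, and compatible
with a `G`-action on `B`), as a module over the fixed subalgebra `Bᴳ`. -/
def fixedSubmodule {k B : Type*} [CommRing k] [CommRing B] [Algebra k B]
    {G : Type*} [Monoid G] (ρB : G →* (B ≃ₐ[k] B))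
    {P : Type*} [AddCommGroup P] [Module B P]
    (ρP : G →* (P ≃+ P))
    (hP : ∀ (g : G) (b : B) (p : P), ρP g (b • p) = (ρB g b) • (ρP g p)) :
    Submodule (fixedSubalgebra k B ρB) P where
  carrier := {p | ∀ g : G, ρP g p = p}
  add_mem' := fun {a b} ha hb g => by rw [map_add, ha g, hb g]
  zero_mem' := fun g => map_zero _
  smul_mem' := by
    rintro ⟨b, hb⟩ p hp g
    show ρP g (b • p) = b • p
    rw [hP g b p, hb g, hp g]

open Polynomial

section Noether

variable {k B : Type*} [CommRing k] [CommRing B] [Algebra k B]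
  {G : Type*} [Group G] [Fintype G]
  (ρB : G →* (B ≃ₐ[k] B))

/-- orbit polynomial -/
noncomputable def orbPoly (b : B) : B[X] := ∏ g : G, (X - C (ρB g b))

theorem orbPoly_monic (b : B) : (orbPoly ρB b).Monic :=
  monic_prod_of_monic _ _ fun g _ => monic_X_sub_C _

theorem orbPoly_eval (b : B) : (orbPoly ρB b).eval b = 0 := by
  rw [orbPoly, eval_prod]
  apply Finset.prod_eq_zero (Finset.mem_univ (1 : G))
  simp

theorem orbPoly_coeff_fixed (b : B) (m : ℕ) (g : G) :
    ρB g ((orbPoly ρB b).coeff m) = (orbPoly ρB b).coeff m := by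
  have hmap : (orbPoly ρB b).map ((ρB g : B ≃ₐ[k] B) : B →+* B) = orbPoly ρB b := by
    rw [orbPoly, Polynomial.map_prod]
    have : ∀ h : G, (X - C (ρB h b)).map ((ρB g : B ≃ₐ[k] B) : B →+* B)
        = X - C (ρB (g * h) b) := by
      intro h
      rw [Polynomial.map_sub, Polynomial.map_X, Polynomial.map_C]
      simp [map_mul ρB]
    simp_rw [this]
    exact Equiv.prod_comp (Equiv.mulLeft g) (fun h => X - C (ρB h b))
  conv_rhs => rw [← hmap]
  rw [coeff_map]
  rfl

theorem orbPoly_isIntegral (b : B) (A : Subalgebra k B)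
    (hA : ∀ m, (orbPoly ρB b).coeff m ∈ A) : IsIntegral A b := by
  rcases subsingleton_or_nontrivial B with hB | hB
  · exact ⟨X, monic_X, Subsingleton.elim _ _⟩
  have hl : orbPoly ρB b ∈ Polynomial.lifts (algebraMap A B) := by
    rw [Polynomial.lifts_iff_coeff_lifts]
    exact fun n => ⟨⟨_, hA n⟩, rfl⟩
  obtain ⟨q, hq1, _, hq3⟩ :=
    Polynomial.lifts_and_degree_eq_and_monic hl (orbPoly_monic ρB b)
  exact ⟨q, hq3, by rw [← Polynomial.eval_map, hq1, orbPoly_eval]⟩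

end Noether

section Noether2

variable {k B : Type*} [CommRing k] [CommRing B] [Algebra k B]
  {G : Type*} [Group G] [Fintype G]
  (ρB : G →* (B ≃ₐ[k] B))

theorem adjoin_finite_top (A : Subalgebra k B) (s : Finset B)
    (hs : Algebra.adjoin k (s : Set B) = ⊤)
    (hcoeff : ∀ x ∈ s, ∀ m, (orbPoly ρB x).coeff m ∈ A) :
    Module.Finite A B := by
  have hadj : Algebra.adjoin A (s : Set B) = ⊤ := by
    rw [eq_top_iff]
    intro x _
    have hx : x ∈ Algebra.adjoin k (s : Set B) := hs ▸ trivial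
    have hle : Algebra.adjoin k (s : Set B) ≤
        (Algebra.adjoin A (s : Set B)).restrictScalars k :=
      Algebra.adjoin_le Algebra.subset_adjoin
    exact hle hx
  have hfg : (Algebra.adjoin A (s : Set B)).toSubmodule.FG :=
    fg_adjoin_of_finite s.finite_toSet fun x hx =>
      orbPoly_isIntegral ρB x A (hcoeff x hx)
  rw [hadj] at hfg
  exact Module.finite_def.mpr hfg

end Noether2

section Noether3

variable {k B : Type*} [CommRing k] [CommRing B] [Algebra k B]
  {G : Type*} [Group G] [Fintype G]
  (hG : IsUnit ((Fintype.card G : ℕ) : k))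
  (ρB : G →* (B ≃ₐ[k] B))

/-- Reynolds operator on `B`. -/
noncomputable def reynoldsB (b : B) : B :=
  ((hG.unit⁻¹ : kˣ) : k) • ∑ g : G, ρB g b

theorem algEquiv_smul (e : B ≃ₐ[k] B) (c : k) (x : B) : e (c • x) = c • e x := by
  rw [Algebra.smul_def, map_mul, AlgEquiv.commutes, ← Algebra.smul_def]

theorem reynoldsB_mem (b : B) : reynoldsB hG ρB b ∈ fixedSubalgebra k B ρB := by
  intro h
  rw [reynoldsB, algEquiv_smul, map_sum]
  congr 1
  have : ∀ g : G, ρB h (ρB g b) = ρB (h * g) b := by intro g; simp [map_mul ρB]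
  simp_rw [this]
  exact Equiv.sum_comp (Equiv.mulLeft h) (fun g => ρB g b)

theorem reynoldsB_fixed (b : B) (hb : b ∈ fixedSubalgebra k B ρB) :
    reynoldsB hG ρB b = b := by
  rw [reynoldsB]
  have : ∀ g : G, ρB g b = b := hb
  simp_rw [this, Finset.sum_const, Finset.card_univ]
  rw [← Nat.cast_smul_eq_nsmul k (Fintype.card G) b, smul_smul]
  have h1 : ((hG.unit⁻¹ : kˣ) : k) * ((Fintype.card G : ℕ) : k) = 1 := by
    exact hG.val_inv_mul
  rw [h1, one_smul]

theorem reynoldsB_mul (a b : B) (ha : a ∈ fixedSubalgebra k B ρB) :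
    reynoldsB hG ρB (a * b) = a * reynoldsB hG ρB b := by
  rw [reynoldsB, reynoldsB, Algebra.mul_smul_comm, Finset.mul_sum]
  congr 1
  refine Finset.sum_congr rfl fun g _ => ?_
  rw [map_mul, ha g]

theorem reynoldsB_add (a b : B) :
    reynoldsB hG ρB (a + b) = reynoldsB hG ρB a + reynoldsB hG ρB b := by
  simp [reynoldsB, Finset.sum_add_distrib, smul_add]

theorem reynoldsB_zero : reynoldsB hG ρB 0 = 0 := by simp [reynoldsB]

end Noether3

section Noether4

variable {k B : Type*} [CommRing k] [CommRing B] [Algebra k B]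
  {G : Type*} [Group G] [Fintype G]
  (ρB : G →* (B ≃ₐ[k] B))

theorem span_induction_helper {k B : Type*} [CommRing k] [CommRing B] [Algebra k B]
    (A : Subalgebra k B) (t : Finset B)
    (S : Subalgebra k B) (f : B → B)
    (hf0 : f 0 = 0) (hfadd : ∀ x y, f (x + y) = f x + f y)
    (hfmul : ∀ a x, a ∈ A → f (a * x) = a * f x)
    (hmem : ∀ x ∈ t, f x ∈ S) (hA : ∀ a ∈ A, a ∈ S)
    (x : B) (hx : x ∈ Submodule.span A (t : Set B)) : f x ∈ S := by
  refine Submodule.span_induction (p := fun y _ => f y ∈ S) ?_ ?_ ?_ ?_ hx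
  · exact hmem
  · show f 0 ∈ S
    rw [hf0]; exact S.zero_mem
  · intro y z _ _ hy hz
    show f (y + z) ∈ S
    rw [hfadd]; exact S.add_mem hy hz
  · intro a y _ hy
    show f (a • y) ∈ S
    have hay : a • y = (a : B) * y := rfl
    rw [hay, hfmul _ _ a.2]
    exact S.mul_mem (hA _ a.2) hy

theorem fixed_fg_aux (hG : IsUnit ((Fintype.card G : ℕ) : k))
    (A : Subalgebra k B) (hAle : A ≤ fixedSubalgebra k B ρB)
    (T : Finset B) (hTA : Algebra.adjoin k (T : Set B) = A)
    (t : Finset B) (ht : Submodule.span A (t : Set B) = ⊤) :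
    (fixedSubalgebra k B ρB : Subalgebra k B).FG := by
  classical
  refine ⟨T ∪ t.image (reynoldsB hG ρB), le_antisymm ?_ ?_⟩
  · apply Algebra.adjoin_le
    intro c hc
    rcases Finset.mem_union.mp hc with h | h
    · exact hAle (hTA ▸ Algebra.subset_adjoin h)
    · obtain ⟨y, _, rfl⟩ := Finset.mem_image.mp h
      exact reynoldsB_mem hG ρB y
  · intro x hx
    have hxs : x ∈ Submodule.span A (t : Set B) := by rw [ht]; trivial
    have key : reynoldsB hG ρB x ∈
        Algebra.adjoin k ((T ∪ t.image (reynoldsB hG ρB) : Finset B) : Set B) := by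
      refine span_induction_helper A t _ (reynoldsB hG ρB) (reynoldsB_zero hG ρB)
        (reynoldsB_add hG ρB) (fun a y ha => reynoldsB_mul hG ρB a y (hAle ha))
        ?_ ?_ x hxs
      · intro y hy
        exact Algebra.subset_adjoin
          (Finset.mem_coe.mpr (Finset.mem_union_right _ (Finset.mem_image_of_mem _ hy)))
      · intro a ha
        have ha' : a ∈ Algebra.adjoin k (T : Set B) := hTA ▸ ha
        have hsub : (T : Set B) ⊆ ((T ∪ t.image (reynoldsB hG ρB) : Finset B) : Set B) := by
          intro c hc
          exact Finset.mem_coe.mpr (Finset.mem_union_left _ (Finset.mem_coe.mp hc))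
        exact Algebra.adjoin_mono hsub ha'
    rwa [reynoldsB_fixed hG ρB x hx] at key

theorem fixed_fg (hG : IsUnit ((Fintype.card G : ℕ) : k)) (hB : Algebra.FiniteType k B) :
    (fixedSubalgebra k B ρB : Subalgebra k B).FG := by
  classical
  obtain ⟨s, hs⟩ := hB.out
  have hTfix : ((s.biUnion (fun x => (orbPoly ρB x).coeffs) : Finset B) : Set B)
      ⊆ (fixedSubalgebra k B ρB : Set B) := by
    intro c hc
    obtain ⟨x, hx, hc⟩ := Finset.mem_biUnion.mp hc
    obtain ⟨n, _, rfl⟩ := Polynomial.mem_coeffs_iff.mp hc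
    exact fun g => orbPoly_coeff_fixed ρB x n g
  obtain ⟨A, hAdef⟩ : ∃ A : Subalgebra k B,
      Algebra.adjoin k ((s.biUnion (fun x => (orbPoly ρB x).coeffs) : Finset B) : Set B)
        = A := ⟨_, rfl⟩
  have hAle : A ≤ fixedSubalgebra k B ρB := hAdef ▸ Algebra.adjoin_le hTfix
  have hcoeff : ∀ x ∈ s, ∀ m, (orbPoly ρB x).coeff m ∈ A := by
    intro x hx m
    by_cases h : (orbPoly ρB x).coeff m = 0
    · rw [h]; exact A.zero_mem
    · exact hAdef ▸ Algebra.subset_adjoin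
        (Finset.mem_biUnion.mpr ⟨x, hx, Polynomial.coeff_mem_coeffs h⟩)
  haveI hfin := adjoin_finite_top ρB A s hs hcoeff
  obtain ⟨t, ht⟩ := Module.finite_def.mp hfin
  exact fixed_fg_aux ρB hG A hAle _ hAdef t ht

end Noether4

section NoetherP

variable {k B : Type*} [CommRing k] [CommRing B] [Algebra k B]
  {G : Type*} [Group G] [Fintype G]
  (ρB : G →* (B ≃ₐ[k] B))
  {P : Type*} [AddCommGroup P] [Module B P]
  (ρP : G →* (P ≃+ P))

/-- Reynolds operator on `P`. -/
noncomputable def reynoldsP (hG : IsUnit ((Fintype.card G : ℕ) : k)) (p : P) : P :=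
  (algebraMap k B ((hG.unit⁻¹ : kˣ) : k)) • ∑ g : G, ρP g p

variable (hG : IsUnit ((Fintype.card G : ℕ) : k))
  (hP : ∀ (g : G) (b : B) (p : P), ρP g (b • p) = (ρB g b) • (ρP g p))

theorem ρP_comp (h g : G) (p : P) : ρP h (ρP g p) = ρP (h * g) p := by
  rw [map_mul ρP]; rfl

include hP in
theorem reynoldsP_mem (p : P) (h : G) :
    ρP h (reynoldsP (B := B) ρP hG p) = reynoldsP (B := B) ρP hG p := by
  rw [reynoldsP, hP h, AlgEquiv.commutes, map_sum]
  congr 1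
  simp_rw [ρP_comp ρP]
  exact Equiv.sum_comp (Equiv.mulLeft h) (fun g => ρP g p)

theorem reynoldsP_fixed (p : P) (hp : ∀ g : G, ρP g p = p) :
    reynoldsP (B := B) ρP hG p = p := by
  rw [reynoldsP]
  simp_rw [hp, Finset.sum_const, Finset.card_univ]
  rw [← Nat.cast_smul_eq_nsmul B (Fintype.card G) p, smul_smul,
    ← map_natCast (algebraMap k B) (Fintype.card G), ← map_mul]
  have h1 : ((hG.unit⁻¹ : kˣ) : k) * ((Fintype.card G : ℕ) : k) = 1 := hG.val_inv_mul
  rw [h1, map_one, one_smul]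

include hP in
theorem reynoldsP_smul (b : B) (hb : ∀ g : G, ρB g b = b) (p : P) :
    reynoldsP (B := B) ρP hG (b • p) = b • reynoldsP (B := B) ρP hG p := by
  rw [reynoldsP, reynoldsP]
  have : ∀ g : G, ρP g (b • p) = b • ρP g p := fun g => by rw [hP g, hb g]
  simp_rw [this, ← Finset.smul_sum]
  rw [smul_smul, smul_smul, mul_comm]

theorem reynoldsP_add (p q : P) :
    reynoldsP (B := B) ρP hG (p + q) = reynoldsP (B := B) ρP hG p + reynoldsP (B := B) ρP hG q := by
  simp [reynoldsP, Finset.sum_add_distrib, smul_add]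

end NoetherP

section Assemble

variable {k B : Type*} [CommRing k] [CommRing B] [Algebra k B]
  {G : Type*} [Group G] [Fintype G]

theorem fixed_submodule_finite (hG : IsUnit ((Fintype.card G : ℕ) : k))
    (ρB : G →* (B ≃ₐ[k] B)) (hB : Algebra.FiniteType k B)
    {P : Type*} [AddCommGroup P] [Module B P] (hPfin : Module.Finite B P)
    (ρP : G →* (P ≃+ P))
    (hP : ∀ (g : G) (b : B) (p : P), ρP g (b • p) = (ρB g b) • (ρP g p)) :
    Module.Finite (fixedSubalgebra k B ρB) (fixedSubmodule ρB ρP hP) := by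
  classical
  obtain ⟨s, hs⟩ := hB.out
  haveI hBfin : Module.Finite (fixedSubalgebra k B ρB) B :=
    adjoin_finite_top ρB _ s hs
      (fun x _ m => fun g => orbPoly_coeff_fixed ρB x m g)
  haveI := hPfin
  haveI hPBg : Module.Finite (fixedSubalgebra k B ρB) P := Module.Finite.trans B P
  let RP : P →ₗ[fixedSubalgebra k B ρB] P :=
    { toFun := reynoldsP (B := B) ρP hG
      map_add' := reynoldsP_add (B := B) ρP hG
      map_smul' := by
        intro a p
        show reynoldsP (B := B) ρP hG (a • p) = a • reynoldsP (B := B) ρP hG p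
        rw [Subalgebra.smul_def, Subalgebra.smul_def]
        exact reynoldsP_smul ρB ρP hG hP (a : B) a.2 p }
  have hrange : fixedSubmodule ρB ρP hP = Submodule.map RP ⊤ := by
    apply le_antisymm
    · intro p hp
      exact ⟨p, trivial, reynoldsP_fixed (B := B) ρP hG p hp⟩
    · rintro _ ⟨p, -, rfl⟩
      intro g
      exact reynoldsP_mem ρB ρP hG hP p g
  rw [Module.Finite.iff_fg, hrange]
  exact Submodule.FG.map RP (Module.finite_def.mp hPBg)

end Assemble

universe u

set_option synthInstance.maxHeartbeats 1000000
set_option maxHeartbeats 1000000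

/-- **Corollary 4.7** for a finite linearly reductive group: if a finite group `G` with `|G|`
invertible in `k` acts linearly on `k[x₁,…,xₙ]` and `I` is a `G`-stable ideal, then for the
quotient `B = k[x₁,…,xₙ]/I` with the induced action: (1) `Bᴳ` is a finitely generated
`k`-algebra, and (2) for every finitely generated `B`-module `P` with a compatible `G`-action,
`Pᴳ` is a finitely generated `Bᴳ`-module. -/
theorem stmt4 (k : Type u) [CommRing k]
    (G : Type u) [Group G] [Fintype G]
    (hG : IsUnit ((Fintype.card G : ℕ) : k))
    (n : ℕ)
    (ρ : G →* (MvPolynomial (Fin n) k ≃ₐ[k] MvPolynomial (Fin n) k))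
    (hgraded : ∀ (g : G) (d : ℕ), ∀ p ∈ MvPolynomial.homogeneousSubmodule (Fin n) k d,
      ρ g p ∈ MvPolynomial.homogeneousSubmodule (Fin n) k d)
    (I : Ideal (MvPolynomial (Fin n) k))
    (hI : ∀ (g : G), ∀ x ∈ I, ρ g x ∈ I)
    -- the induced action on `B = k[x₁,…,xₙ]/I`
    (ρB : G →* ((MvPolynomial (Fin n) k ⧸ I) ≃ₐ[k] (MvPolynomial (Fin n) k ⧸ I)))
    (hρB : ∀ (g : G) (p : MvPolynomial (Fin n) k),
      ρB g (Ideal.Quotient.mk I p) = Ideal.Quotient.mk I (ρ g p)) :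
    Algebra.FiniteType k (fixedSubalgebra k (MvPolynomial (Fin n) k ⧸ I) ρB) ∧
    ∀ (P : Type u) [AddCommGroup P] [Module (MvPolynomial (Fin n) k ⧸ I) P],
      Module.Finite (MvPolynomial (Fin n) k ⧸ I) P →
      ∀ (ρP : G →* (P ≃+ P))
        (hP : ∀ (g : G) (b : MvPolynomial (Fin n) k ⧸ I) (p : P),
          ρP g (b • p) = (ρB g b) • (ρP g p)),
        Module.Finite (fixedSubalgebra k (MvPolynomial (Fin n) k ⧸ I) ρB)
          (fixedSubmodule ρB ρP hP) := by
  have hB : Algebra.FiniteType k (MvPolynomial (Fin n) k ⧸ I) :=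
    Algebra.FiniteType.of_surjective
      (Ideal.Quotient.mkₐ k I) (Ideal.Quotient.mkₐ_surjective k I)
  constructor
  · exact (Subalgebra.fg_iff_finiteType _).mp (fixed_fg ρB hG hB)
  · intro P _ _ hPfin ρP hP
    exact fixed_submodule_finite hG ρB hB hPfin ρP hP
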